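/- For $\theta^2\in(7/9,1)$, the pair $\eta_s(x,t)=\eta_0\,\mathrm{sech}^2(\lambda(x-c_st-x_0))$, $u_s(x,t)=B\,\eta_s(x,t)$ with $\eta_0=\frac92\frac{\theta^2-7/9}{1-\theta^2}$, $c_s=\frac{4(\theta^2-2/3)}{\sqrt{2(1-\theta^2)(\theta^2-1/3)}}$, $\lambda=\frac12\sqrt{\frac{3(\theta^2-7/9)}{(\theta^2-1/3)(\theta^2-2/3)}}$, $B=\sqrt{\frac{2(1-\theta^2)}{\theta^2-1/3}}$, is an exact classical solution of the Bona–Smith system $\eta_t+u_x+(\eta u)_x-b\eta_{xxt}=0$, $u_t+\eta_x+uu_x+c\eta_{xxx}-bu_{xxt}=0$ with $b=\frac{3\theta^2-1}{6}$ and $c=\frac{2-3\theta^2}{3}$. -/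

import Mathlib

/-- `sech y = 1 / cosh y`. -/
noncomputable def sech (y : ℝ) : ℝ := 1 / Real.cosh y

noncomputable def P (y : ℝ) : ℝ := sech y ^ 2
noncomputable def P1 (y : ℝ) : ℝ := -2 * Real.sinh y / Real.cosh y ^ 3
noncomputable def P2 (y : ℝ) : ℝ := 4 * P y - 6 * (P y) ^ 2

lemma hP (y : ℝ) : HasDerivAt P (P1 y) y := by
  have hc : Real.cosh y ≠ 0 := (Real.cosh_pos y).ne'
  have h := ((hasDerivAt_const y (1:ℝ)).div (Real.hasDerivAt_cosh y) hc).pow 2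
  refine h.congr_deriv ?_
  symm
  unfold P1
  norm_num
  ring_nf

lemma hP1 (y : ℝ) : HasDerivAt P1 (P2 y) y := by
  have hc : Real.cosh y ≠ 0 := (Real.cosh_pos y).ne'
  have h := ((Real.hasDerivAt_sinh y).const_mul (-2)).div ((Real.hasDerivAt_cosh y).pow 3) (pow_ne_zero 3 hc)
  refine h.congr_deriv ?_
  symm
  have hs := Real.cosh_sq_sub_sinh_sq y
  unfold P2 P sech
  norm_num
  field_simp
  linear_combination 6 * hs

lemma hP2 (y : ℝ) : HasDerivAt P2 ((4 - 12 * P y) * P1 y) y := by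
  have h := ((hP y).const_mul 4).sub (((hP y).pow 2).const_mul 6)
  refine h.congr_deriv ?_
  symm
  ring

lemma hP_sq (y : ℝ) : HasDerivAt (fun y => sech y ^ 2) (P1 y) y := hP y


/-- for `θ² ∈ (7/9,1)` the explicit `sech²` traveling-wave pair
`(η_s, u_s)` solves the Bona-Smith system
`η_t + u_x + (ηu)_x - b η_{xxt} = 0`,
`u_t + η_x + u u_x + c η_{xxx} - b u_{xxt} = 0`
with `b = (3θ²-1)/6`, `c = (2-3θ²)/3`. -/
theorem bona_smith_solitary_wave (θsq : ℝ) (h₁ : 7/9 < θsq) (h₂ : θsq < 1)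
    (x₀ : ℝ) :
    let η₀ : ℝ := (9/2) * (θsq - 7/9) / (1 - θsq)
    let cs : ℝ := 4 * (θsq - 2/3) / Real.sqrt (2 * (1 - θsq) * (θsq - 1/3))
    let lam : ℝ := (1/2) * Real.sqrt (3 * (θsq - 7/9) / ((θsq - 1/3) * (θsq - 2/3)))
    let B : ℝ := Real.sqrt (2 * (1 - θsq) / (θsq - 1/3))
    let b : ℝ := (3 * θsq - 1) / 6
    let c : ℝ := (2 - 3 * θsq) / 3
    let ηs : ℝ → ℝ → ℝ := fun x t => η₀ * (sech (lam * (x - cs * t - x₀)))^2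
    let us : ℝ → ℝ → ℝ := fun x t => B * ηs x t
    ∀ x t : ℝ,
      deriv (fun s => ηs x s) t + deriv (fun y => us y t) x
        + deriv (fun y => ηs y t * us y t) x
        - b * deriv (fun s => deriv (fun y => deriv (fun z => ηs z s) y) x) t = 0 ∧
      deriv (fun s => us x s) t + deriv (fun y => ηs y t) x
        + us x t * deriv (fun y => us y t) x
        + c * deriv (fun y => deriv (fun z => deriv (fun r => ηs r t) z) y) x
        - b * deriv (fun s => deriv (fun y => deriv (fun z => us z s) y) x) t = 0 := by
  intro η₀ cs lam B b c ηs us x t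
  have hD : (0:ℝ) < θsq - 1/3 := by linarith
  have hE : (0:ℝ) < 1 - θsq := by linarith
  have hF : (0:ℝ) < θsq - 2/3 := by linarith
  have hG : (0:ℝ) < θsq - 7/9 := by linarith
  have hη₀ : η₀ = (9/2) * (θsq - 7/9) / (1 - θsq) := rfl
  have hb : b = (3 * θsq - 1) / 6 := rfl
  have hc : c = (2 - 3 * θsq) / 3 := rfl
  have hB2 : B ^ 2 = 2 * (1 - θsq) / (θsq - 1/3) := Real.sq_sqrt (by positivity)
  have hBpos : 0 < B := Real.sqrt_pos.2 (by positivity)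
  have hlam2 : lam ^ 2 = 3 * (θsq - 7/9) / ((θsq - 1/3) * (θsq - 2/3)) / 4 := by
    show ((1/2) * Real.sqrt _) ^ 2 = _
    rw [mul_pow, Real.sq_sqrt (by positivity)]
    ring
  have hs1pos : 0 < Real.sqrt (2 * (1 - θsq) * (θsq - 1/3)) := Real.sqrt_pos.2 (by positivity)
  have hBs1 : B * Real.sqrt (2 * (1 - θsq) * (θsq - 1/3)) = 2 * (1 - θsq) := by
    show Real.sqrt _ * _ = _
    rw [← Real.sqrt_mul (by positivity)]
    rw [show 2*(1-θsq)/(θsq-1/3) * (2*(1-θsq)*(θsq-1/3)) = (2*(1-θsq))^2 by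
      rw [div_mul_eq_mul_div, div_eq_iff hD.ne']; ring]
    exact Real.sqrt_sq (by positivity)
  have hcs : cs = 2 * (θsq - 2/3) * B / (1 - θsq) := by
    show 4 * (θsq - 2/3) / Real.sqrt _ = _
    rw [div_eq_div_iff hs1pos.ne' hE.ne']
    linear_combination (-(2 * (θsq - 2/3))) * hBs1
  have hB2' : B ^ 2 * (θsq - 1/3) = 2 * (1 - θsq) := by
    rw [hB2, div_mul_eq_mul_div, div_eq_iff hD.ne']
  have hBcs : B * cs = 4 * (θsq - 2/3) / (θsq - 1/3) := by
    rw [hcs, show B * (2 * (θsq - 2/3) * B / (1 - θsq)) =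
        2 * (θsq - 2/3) * B ^ 2 / (1 - θsq) by ring,
      div_eq_div_iff hE.ne' hD.ne']
    linear_combination (2 * (θsq - 2/3)) * hB2'
  have hη₀' : η₀ * (1 - θsq) = 9/2 * (θsq - 7/9) := by
    rw [hη₀, div_mul_cancel₀ _ hE.ne']
  have hcs' : cs * (1 - θsq) = 2 * (θsq - 2/3) * B := by
    rw [hcs, div_mul_cancel₀ _ hE.ne']
  have hlam2' : lam ^ 2 * ((θsq - 1/3) * (θsq - 2/3) * 4) = 3 * (θsq - 7/9) := by
    rw [hlam2, div_div, div_mul_cancel₀ _ (by positivity)]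
  have hBcs' : (B * cs) * (θsq - 1/3) = 4 * (θsq - 2/3) := by
    rw [hBcs, div_mul_cancel₀ _ hD.ne']
  have hK1 : η₀ * (B - cs) + 4 * b * lam ^ 2 * cs * η₀ = 0 := by
    have hs : ((1-θsq)^2 * ((θsq-1/3) * (θsq-2/3))) *
        (η₀ * (B - cs) + 4 * b * lam ^ 2 * cs * η₀) = 0 := by
      linear_combination
        ((θsq-1/3)*(θsq-2/3)*(1-θsq)*B - (θsq-1/3)*(θsq-2/3)*(1-θsq)*cs
          + 3*(θsq-7/9)*b*cs*(1-θsq)) * hη₀'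
        + (-((θsq-1/3)*(9/2*(θsq-7/9))*(θsq-2/3)) + 3*(θsq-7/9)*b*(9/2*(θsq-7/9))) * hcs'
        + (b*η₀*cs*(1-θsq)^2) * hlam2'
        + (6*(θsq-7/9)*(9/2*(θsq-7/9))*(θsq-2/3)*B) * hb
    exact (mul_eq_zero.mp hs).resolve_left (by positivity)
  have hK2 : 2 * B * η₀ ^ 2 - 12 * b * lam ^ 2 * cs * η₀ = 0 := by
    have hs : ((1-θsq)^2 * ((θsq-1/3) * (θsq-2/3))) *
        (2 * B * η₀ ^ 2 - 12 * b * lam ^ 2 * cs * η₀) = 0 := by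
      linear_combination
        (2*B*(θsq-1/3)*(θsq-2/3)*η₀*(1-θsq) + 2*B*(θsq-1/3)*(θsq-2/3)*(9/2*(θsq-7/9))
          - 9*(θsq-7/9)*b*cs*(1-θsq)) * hη₀'
        + (-(9*(θsq-7/9)*b*(9/2*(θsq-7/9)))) * hcs'
        + (-(3*b*η₀*cs*(1-θsq)^2)) * hlam2'
        + (-(18*(θsq-7/9)*(9/2*(θsq-7/9))*(θsq-2/3)*B)) * hb
    exact (mul_eq_zero.mp hs).resolve_left (by positivity)
  have hK3 : η₀ * (1 - B * cs) + 4 * lam ^ 2 * η₀ * (c + b * (B * cs)) = 0 := by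
    have hs : ((1-θsq) * (θsq-1/3)^2 * (θsq-2/3) * 4) *
        (η₀ * (1 - B * cs) + 4 * lam ^ 2 * η₀ * (c + b * (B * cs))) = 0 := by
      linear_combination
        (4*(θsq-1/3)^2*(θsq-2/3) - 16*(θsq-1/3)*(θsq-2/3)^2 + 12*(θsq-1/3)*(θsq-7/9)*c
          + 48*(θsq-7/9)*(θsq-2/3)*b) * hη₀'
        + (-(4*(θsq-1/3)*(θsq-2/3)*(1-θsq)*η₀) + 12*(θsq-7/9)*(1-θsq)*η₀*b) * hBcs'
        + (4*(θsq-1/3)*(1-θsq)*η₀*c + 4*(θsq-1/3)*(1-θsq)*η₀*b*(B*cs)) * hlam2'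
        + (12*(θsq-1/3)*(θsq-7/9)*(9/2*(θsq-7/9))) * hc
        + (48*(θsq-7/9)*(θsq-2/3)*(9/2*(θsq-7/9))) * hb
    exact (mul_eq_zero.mp hs).resolve_left (by positivity)
  have hK4 : B ^ 2 * η₀ ^ 2 - 12 * lam ^ 2 * η₀ * (c + b * (B * cs)) = 0 := by
    have hs : (4 * (θsq-1/3)^2 * (θsq-2/3) * (1-θsq)^2) *
        (B ^ 2 * η₀ ^ 2 - 12 * lam ^ 2 * η₀ * (c + b * (B * cs))) = 0 := by
      linear_combination
        (4*(θsq-1/3)*(θsq-2/3)*(1-θsq)^2*η₀^2) * hB2'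
        + (8*(θsq-1/3)*(θsq-2/3)*(1-θsq)*(η₀*(1-θsq) + 9/2*(θsq-7/9))
          - 36*(θsq-1/3)*(θsq-7/9)*(1-θsq)*c - 144*(θsq-7/9)*(θsq-2/3)*(1-θsq)*b) * hη₀'
        + (-(36*(θsq-7/9)*(1-θsq)^2*η₀*b)) * hBcs'
        + (-(12*(θsq-1/3)*(1-θsq)^2*η₀*c) - 12*(θsq-1/3)*(1-θsq)^2*η₀*b*(B*cs)) * hlam2'
        + (-(36*(θsq-1/3)*(θsq-7/9)*(1-θsq)*(9/2*(θsq-7/9)))) * hc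
        + (-(144*(θsq-7/9)*(θsq-2/3)*(1-θsq)*(9/2*(θsq-7/9)))) * hb
    exact (mul_eq_zero.mp hs).resolve_left (by positivity)
  -- derivatives of the inner affine maps
  have hgx : ∀ T X : ℝ, HasDerivAt (fun y : ℝ => lam * (y - cs * T - x₀)) lam X := by
    intro T X
    simpa using (((hasDerivAt_id X).sub_const (cs * T)).sub_const x₀).const_mul lam
  have hgt : ∀ X T : ℝ, HasDerivAt (fun s : ℝ => lam * (X - cs * s - x₀)) (-(lam * cs)) T := by
    intro X T
    have := ((((hasDerivAt_id T).const_mul cs).const_sub X).sub_const x₀).const_mul lam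
    simpa using this
  -- first spatial derivative of η
  have Hηx : ∀ T X : ℝ, HasDerivAt (fun y => ηs y T)
      (η₀ * (P1 (lam * (X - cs * T - x₀)) * lam)) X := by
    intro T X
    exact ((hP (lam * (X - cs * T - x₀))).comp X (hgx T X)).const_mul η₀
  have dηx : ∀ T X : ℝ, deriv (fun y => ηs y T) X
      = η₀ * (P1 (lam * (X - cs * T - x₀)) * lam) := fun T X => (Hηx T X).deriv
  have Hηt : ∀ X T : ℝ, HasDerivAt (fun s => ηs X s)
      (η₀ * (P1 (lam * (X - cs * T - x₀)) * -(lam * cs))) T := by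
    intro X T
    exact ((hP (lam * (X - cs * T - x₀))).comp T (hgt X T)).const_mul η₀
  have Hux : ∀ T X : ℝ, HasDerivAt (fun y => us y T)
      (B * (η₀ * (P1 (lam * (X - cs * T - x₀)) * lam))) X := by
    intro T X
    exact (Hηx T X).const_mul B
  have dux : ∀ T X : ℝ, deriv (fun y => us y T) X
      = B * (η₀ * (P1 (lam * (X - cs * T - x₀)) * lam)) := fun T X => (Hux T X).deriv
  have Hut : ∀ X T : ℝ, HasDerivAt (fun s => us X s)
      (B * (η₀ * (P1 (lam * (X - cs * T - x₀)) * -(lam * cs)))) T := by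
    intro X T
    exact (Hηt X T).const_mul B
  -- second spatial derivatives
  have dηxx : ∀ T X : ℝ, deriv (fun y => deriv (fun z => ηs z T) y) X
      = η₀ * (P2 (lam * (X - cs * T - x₀)) * lam * lam) := by
    intro T X
    have hfun : (fun y => deriv (fun z => ηs z T) y)
        = fun y => η₀ * (P1 (lam * (y - cs * T - x₀)) * lam) := funext (dηx T)
    rw [hfun]
    have h := ((((hP1 (lam * (X - cs * T - x₀))).comp X (hgx T X)).mul_const lam).const_mul η₀)
    exact h.deriv.trans (by ring)
  have duxx : ∀ T X : ℝ, deriv (fun y => deriv (fun z => us z T) y) X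
      = B * (η₀ * (P2 (lam * (X - cs * T - x₀)) * lam * lam)) := by
    intro T X
    have hfun : (fun y => deriv (fun z => us z T) y)
        = fun y => B * (η₀ * (P1 (lam * (y - cs * T - x₀)) * lam)) := funext (dux T)
    rw [hfun]
    have h := (((((hP1 (lam * (X - cs * T - x₀))).comp X (hgx T X)).mul_const lam).const_mul η₀).const_mul B)
    exact h.deriv.trans (by ring)
  -- third derivatives appearing in the system
  have dηxxt : deriv (fun s => deriv (fun y => deriv (fun z => ηs z s) y) x) t
      = η₀ * lam ^ 2 * (-(lam * cs)) * ((4 - 12 * P (lam * (x - cs * t - x₀)))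
        * P1 (lam * (x - cs * t - x₀))) := by
    have hfun : (fun s => deriv (fun y => deriv (fun z => ηs z s) y) x)
        = fun s => η₀ * (P2 (lam * (x - cs * s - x₀)) * lam * lam) :=
      funext (fun s => dηxx s x)
    rw [hfun]
    have h := ((((hP2 (lam * (x - cs * t - x₀))).comp t (hgt x t)).mul_const lam).mul_const lam).const_mul η₀
    exact h.deriv.trans (by ring)
  have duxxt : deriv (fun s => deriv (fun y => deriv (fun z => us z s) y) x) t
      = B * (η₀ * lam ^ 2 * (-(lam * cs)) * ((4 - 12 * P (lam * (x - cs * t - x₀)))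
        * P1 (lam * (x - cs * t - x₀)))) := by
    have hfun : (fun s => deriv (fun y => deriv (fun z => us z s) y) x)
        = fun s => B * (η₀ * (P2 (lam * (x - cs * s - x₀)) * lam * lam)) :=
      funext (fun s => duxx s x)
    rw [hfun]
    have h := (((((hP2 (lam * (x - cs * t - x₀))).comp t (hgt x t)).mul_const lam).mul_const lam).const_mul η₀).const_mul B
    exact h.deriv.trans (by ring)
  have dηxxx : deriv (fun y => deriv (fun z => deriv (fun r => ηs r t) z) y) x
      = η₀ * lam ^ 3 * ((4 - 12 * P (lam * (x - cs * t - x₀)))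
        * P1 (lam * (x - cs * t - x₀))) := by
    have hfun : (fun y => deriv (fun z => deriv (fun r => ηs r t) z) y)
        = fun y => η₀ * (P2 (lam * (y - cs * t - x₀)) * lam * lam) :=
      funext (dηxx t)
    rw [hfun]
    have h := ((((hP2 (lam * (x - cs * t - x₀))).comp x (hgx t x)).mul_const lam).mul_const lam).const_mul η₀
    exact h.deriv.trans (by ring)
  -- product term
  have dprod : deriv (fun y => ηs y t * us y t) x
      = 2 * B * η₀ ^ 2 * lam * P (lam * (x - cs * t - x₀)) * P1 (lam * (x - cs * t - x₀)) := by
    have h := (Hηx t x).mul (Hux t x)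
    exact h.deriv.trans (by
      rw [show ηs x t = η₀ * P (lam * (x - cs * t - x₀)) from rfl,
        show us x t = B * (η₀ * P (lam * (x - cs * t - x₀))) from rfl]
      ring)
  have husv : us x t = B * (η₀ * P (lam * (x - cs * t - x₀))) := rfl
  constructor
  · rw [(Hηt x t).deriv, dux t x, dprod, dηxxt]
    linear_combination (lam * P1 (lam * (x - cs * t - x₀))) * hK1
      + (lam * P1 (lam * (x - cs * t - x₀)) * P (lam * (x - cs * t - x₀))) * hK2
  · rw [(Hut x t).deriv, dηx t x, dux t x, dηxxx, duxxt, husv]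
    linear_combination (lam * P1 (lam * (x - cs * t - x₀))) * hK3
      + (lam * P1 (lam * (x - cs * t - x₀)) * P (lam * (x - cs * t - x₀))) * hK4
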